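/- arXiv:2401.14219 — 3 statements merged into one kernel-verified Lean document; each statement's English description precedes it below -/
import Mathlib

section
/- Let hatγ_t, hatγ_r, a_r, a_t, λ, β_r, P, σ₀² > 0 be real numbers with a_t > hatγ_t·a_r and hatγ_t/(a_t − hatγ_t·a_r) ≤ hatγ_r/a_r. Then for all reals x ≥ 0, w ≥ 0, y ≥ 0, the disjunction [ a_t·λ·β_r·P·x/(a_r·λ·β_r·P·x + λ·β_r·w + σ₀²) ≤ hatγ_t ] OR [ a_r·λ·β_r·P·x/(λ·β_r·w + y·P + σ₀²) ≤ hatγ_r ] holds if and only if x ≤ (hatγ_r/(a_r·P))·( w + y·P/(λ·β_r) + σ₀²/(λ·β_r) ). -/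
/-- combination of the two outage sub-events of the strong user `U_r`
with imperfect SIC into a single threshold event on the channel gain
(step (A.1) → (A.2) in Appendix A). -/
theorem stmt_2 (γt γr a_r a_t lam βr P σ0sq : ℝ)
    (hγt : 0 < γt) (hγr : 0 < γr) (har : 0 < a_r) (hat : 0 < a_t)
    (hlam : 0 < lam) (hβr : 0 < βr) (hP : 0 < P) (hσ0 : 0 < σ0sq)
    (hgt : γt * a_r < a_t)
    (hthr : γt / (a_t - γt * a_r) ≤ γr / a_r) :
    ∀ x w y : ℝ, 0 ≤ x → 0 ≤ w → 0 ≤ y →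
      ((a_t * lam * βr * P * x / (a_r * lam * βr * P * x + lam * βr * w + σ0sq) ≤ γt ∨
        a_r * lam * βr * P * x / (lam * βr * w + y * P + σ0sq) ≤ γr)
        ↔ x ≤ γr / (a_r * P) * (w + y * P / (lam * βr) + σ0sq / (lam * βr))) := by
  intro x w y hx hw hy
  have hd : 0 < a_t - γt * a_r := by linarith
  have hthr' : γt * a_r ≤ γr * (a_t - γt * a_r) := by
    rw [div_le_div_iff₀ hd har] at hthr; linarith
  have hD1 : 0 < a_r * lam * βr * P * x + lam * βr * w + σ0sq := by positivity
  have hD2 : 0 < lam * βr * w + y * P + σ0sq := by positivity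
  have hrw : γr / (a_r * P) * (w + y * P / (lam * βr) + σ0sq / (lam * βr))
      = γr * (lam * βr * w + y * P + σ0sq) / (a_r * P * (lam * βr)) := by
    rw [eq_div_iff (by positivity)]; field_simp
  have h2 : (a_r * lam * βr * P * x / (lam * βr * w + y * P + σ0sq) ≤ γr)
      ↔ x ≤ γr / (a_r * P) * (w + y * P / (lam * βr) + σ0sq / (lam * βr)) := by
    rw [hrw, div_le_iff₀ hD2, le_div_iff₀ (by positivity)]
    constructor <;> intro h <;> nlinarith [h]
  constructor
  · rintro (h | h)
    · rw [div_le_iff₀ hD1] at h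
      rw [← h2, div_le_iff₀ hD2]
      nlinarith [mul_le_mul_of_nonneg_right h har.le,
        mul_le_mul_of_nonneg_right hthr'
          (show (0:ℝ) ≤ lam * βr * w + σ0sq by positivity),
        mul_nonneg (mul_nonneg hy hP.le) (mul_pos hγr hd).le, hd,
        mul_nonneg (mul_nonneg (mul_nonneg hlam.le hβr.le) hP.le) hx]
    · exact h2.mp h
  · intro h
    exact Or.inr (h2.mpr h)
end

section
/- Let a_r, λ, β_r, σ₀², hatγ_r > 0, let X be a nonnegative almost-surely finite random variable, let W be a nonnegative random variable, and let Y be exponentially distributed with mean σ_re² > 0 and independent of X. Define γ(P) = a_r·λ·β_r·P·X/(λ·β_r·W + Y·P + σ₀²) for P > 0. Then: (i) γ(P) ≤ a_r·λ·β_r·X/Y for all P > 0; (ii) consequently Pr(γ(P) < hatγ_r) ≥ Pr(a_r·λ·β_r·X/Y < hatγ_r) for all P > 0; and (iii) the constant c = Pr(a_r·λ·β_r·X/Y < hatγ_r) is strictly positive, so the outage probability Pr(γ(P) < hatγ_r) is bounded below by a positive constant independent of the transmit power P. -/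
open MeasureTheory ProbabilityTheory Set

lemma expMeasure_apply (r : ℝ) (s : Set ℝ) (hs : MeasurableSet s) :
    expMeasure r s = ∫⁻ x in s, exponentialPDF r x := by
  rw [expMeasure, gammaMeasure, withDensity_apply _ hs]; rfl

lemma expMeasure_Iic_zero (r : ℝ) (hr : 0 < r) : expMeasure r (Set.Iic 0) = 0 := by
  rw [expMeasure_apply r _ measurableSet_Iic, lintegral_exponentialPDF_eq_antiDeriv hr 0]
  simp

lemma expMeasure_Ioi_pos (r : ℝ) (hr : 0 < r) (y : ℝ) : 0 < expMeasure r (Set.Ioi y) := by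
  have hp : IsProbabilityMeasure (expMeasure r) := isProbabilityMeasure_expMeasure hr
  have hIic : expMeasure r (Set.Iic y) < 1 := by
    rw [expMeasure_apply r _ measurableSet_Iic, lintegral_exponentialPDF_eq_antiDeriv hr y]
    split_ifs with h
    · exact ENNReal.ofReal_lt_one.2 (by nlinarith [Real.exp_pos (-(r * y))])
    · simp
  have hc : expMeasure r (Set.Ioi y) = 1 - expMeasure r (Set.Iic y) := by
    rw [show Set.Ioi y = (Set.Iic y)ᶜ from Set.compl_Iic.symm,
      measure_compl measurableSet_Iic (measure_ne_top _ _), measure_univ]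
  rw [hc]
  exact tsub_pos_of_lt hIic

/-- with exponential residual interference `Y` independent of the channel
gain `X`, the ipSIC SINR `γ(P) = a_r·λ·β_r·P·X/(λ·β_r·W + Y·P + σ₀²)` is bounded by
`a_r·λ·β_r·X/Y`, so the outage probability is bounded below by the positive constant
`Pr(a_r·λ·β_r·X/Y < γ̂_r)` for every transmit power `P` (error floor, Remark 2). -/
theorem stmt_10 (a_r lam βr σ0sq γr σre : ℝ)
    (har : 0 < a_r) (hlam : 0 < lam) (hβr : 0 < βr) (hσ0 : 0 < σ0sq) (hγr : 0 < γr)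
    (hσre : 0 < σre)
    (Ω : Type) [MeasureSpace Ω] (hprob : IsProbabilityMeasure (ℙ : Measure Ω))
    (X W Y : Ω → ℝ) (hXm : Measurable X) (hYm : Measurable Y)
    (hX0 : ∀ᵐ ω ∂(ℙ : Measure Ω), 0 ≤ X ω)
    (hW0 : ∀ᵐ ω ∂(ℙ : Measure Ω), 0 ≤ W ω)
    (hYdist : Measure.map Y (ℙ : Measure Ω) = expMeasure (1 / σre ^ 2))
    (hindep : IndepFun X Y (ℙ : Measure Ω)) :
    (∀ P : ℝ, 0 < P → ∀ᵐ ω ∂(ℙ : Measure Ω),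
      a_r * lam * βr * P * X ω / (lam * βr * W ω + Y ω * P + σ0sq)
        ≤ a_r * lam * βr * X ω / Y ω) ∧
    (∀ P : ℝ, 0 < P →
      (ℙ : Measure Ω) {ω | a_r * lam * βr * X ω / Y ω < γr}
        ≤ (ℙ : Measure Ω) {ω |
            a_r * lam * βr * P * X ω / (lam * βr * W ω + Y ω * P + σ0sq) < γr}) ∧
    0 < (ℙ : Measure Ω) {ω | a_r * lam * βr * X ω / Y ω < γr} := by
  have hr : (0 : ℝ) < 1 / σre ^ 2 := by positivity
  -- Y > 0 a.e.
  have hYpos : ∀ᵐ ω ∂(ℙ : Measure Ω), 0 < Y ω := by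
    have h0 : (ℙ : Measure Ω) {ω | ¬ 0 < Y ω} = 0 := by
      have hs : {ω | ¬ 0 < Y ω} = Y ⁻¹' (Set.Iic 0) := by
        ext ω; simp [not_lt]
      rw [hs, ← Measure.map_apply hYm measurableSet_Iic, hYdist,
        expMeasure_Iic_zero _ hr]
    exact (ae_iff).2 h0
  -- part (i)
  have part1 : ∀ P : ℝ, 0 < P → ∀ᵐ ω ∂(ℙ : Measure Ω),
      a_r * lam * βr * P * X ω / (lam * βr * W ω + Y ω * P + σ0sq)
        ≤ a_r * lam * βr * X ω / Y ω := by
    intro P hP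
    filter_upwards [hX0, hW0, hYpos] with ω hX hW hY
    have hYP : 0 < Y ω * P := mul_pos hY hP
    have hden : Y ω * P ≤ lam * βr * W ω + Y ω * P + σ0sq := by nlinarith [mul_nonneg (mul_nonneg hlam.le hβr.le) hW]
    have hnum : 0 ≤ a_r * lam * βr * P * X ω := by positivity
    calc a_r * lam * βr * P * X ω / (lam * βr * W ω + Y ω * P + σ0sq)
        ≤ a_r * lam * βr * P * X ω / (Y ω * P) := by gcongr
      _ = a_r * lam * βr * X ω / Y ω := by
          field_simp
  refine ⟨part1, ?_, ?_⟩
  · -- part (ii)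
    intro P hP
    refine measure_mono_ae ?_
    filter_upwards [part1 P hP] with ω hle hmem
    exact lt_of_le_of_lt hle hmem
  · -- part (iii)
    obtain ⟨n, hn⟩ : ∃ n : ℕ, (ℙ : Measure Ω) {ω | X ω ≤ (n : ℝ)} ≠ 0 := by
      by_contra h
      push_neg at h
      have hU : (Set.univ : Set Ω) = ⋃ n : ℕ, {ω | X ω ≤ (n : ℝ)} := by
        ext ω
        simp only [Set.mem_univ, Set.mem_iUnion, Set.mem_setOf_eq, true_iff]
        exact exists_nat_ge (X ω)
      have : (ℙ : Measure Ω) Set.univ = 0 := by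
        rw [hU]
        exact measure_iUnion_null h
      simp [measure_univ] at this
    set t : ℝ := (n : ℝ) with ht
    have ht0 : 0 ≤ t := Nat.cast_nonneg n
    set y0 : ℝ := a_r * lam * βr * t / γr + 1 with hy0
    have hy0pos : 0 < y0 := by positivity
    have hsub : {ω | X ω ≤ t} ∩ Y ⁻¹' (Set.Ioi y0)
        ⊆ {ω | a_r * lam * βr * X ω / Y ω < γr} := by
      rintro ω ⟨hXt, hYgt⟩
      have hYgt' : y0 < Y ω := hYgt
      have hYpos' : 0 < Y ω := lt_trans hy0pos hYgt'
      rw [Set.mem_setOf_eq, div_lt_iff₀ hYpos']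
      have h1 : a_r * lam * βr * X ω ≤ a_r * lam * βr * t :=
        mul_le_mul_of_nonneg_left hXt (by positivity)
      have h2 : a_r * lam * βr * t < γr * y0 := by
        rw [hy0]
        field_simp
        nlinarith
      nlinarith
    have hY0 : (ℙ : Measure Ω) (Y ⁻¹' (Set.Ioi y0)) ≠ 0 := by
      rw [← Measure.map_apply hYm measurableSet_Ioi, hYdist]
      exact (expMeasure_Ioi_pos _ hr y0).ne'
    have hXset : {ω | X ω ≤ t} = X ⁻¹' (Set.Iic t) := rfl
    have hmul : (ℙ : Measure Ω) ({ω | X ω ≤ t} ∩ Y ⁻¹' (Set.Ioi y0))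
        = (ℙ : Measure Ω) {ω | X ω ≤ t} * (ℙ : Measure Ω) (Y ⁻¹' (Set.Ioi y0)) := by
      rw [hXset]
      exact hindep.measure_inter_preimage_eq_mul _ _ measurableSet_Iic measurableSet_Ioi
    have hpos : 0 < (ℙ : Measure Ω) ({ω | X ω ≤ t} ∩ Y ⁻¹' (Set.Ioi y0)) := by
      rw [hmul]
      exact ENNReal.mul_pos hn hY0
    exact lt_of_lt_of_le hpos (measure_mono hsub)
end

section
/- Under the model of the previous setting — a_r, a_t, λ, β_t, P, σ₀², σ_s², η₀, ζ, d_s, α, D, p_t, q_t > 0; X and d independent with X having CDF γ(p_t, √x/q_t)/Γ(p_t) and d having density 2z/D² on [0, D]; γ_t = a_t·λ·β_t·P·G_c/( a_r·λ·β_t·P·G_c + λ·β_t·W + σ₀² ) with G_c = η₀²·(d_s·d)^{−α}·X and W = η₀·d^{−α}·σ_s²·ζ — the ergodic data rate of U_t satisfies E[log₂(1 + γ_t)] = (1/ln 2) · ∫_0^{a_t/a_r} (1/(1 + x)) · [ 1 − ∫_0^D (2z/D²) · γ( p_t, √(T_x(z))/q_t )/Γ(p_t) dz ] dx, where T_x(z)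 = ( x·d_s^α / (P·(a_t − x·a_r)) ) · ( ζ·σ_s²/η₀ + z^α·σ₀²/(η₀²·β_t·λ) ) for 0 < x < a_t/a_r. -/
open MeasureTheory ProbabilityTheory

/-- The lower incomplete gamma function `γ(p, t) = ∫_0^t u^{p−1} e^{−u} du`. -/
noncomputable def lowerGamma (p t : ℝ) : ℝ :=
  ∫ u in Set.Ioc (0 : ℝ) t, u ^ (p - 1) * Real.exp (-u)

lemma lowerGamma_nonneg (p t : ℝ) : 0 ≤ lowerGamma p t := by
  apply setIntegral_nonneg measurableSet_Ioc
  intro u hu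
  have h1 : (0:ℝ) ≤ u ^ (p - 1) := Real.rpow_nonneg (le_of_lt hu.1) _
  positivity

lemma lowerGamma_integrableOn {p : ℝ} (hp : 0 < p) :
    IntegrableOn (fun u : ℝ => u ^ (p - 1) * Real.exp (-u)) (Set.Ioi 0) := by
  exact (Real.GammaIntegral_convergent hp).congr_fun
    (fun x _ => mul_comm _ _) measurableSet_Ioi

lemma lowerGamma_mono {p : ℝ} (hp : 0 < p) : Monotone (lowerGamma p) := by
  intro t₁ t₂ h
  unfold lowerGamma
  apply setIntegral_mono_set
    ((lowerGamma_integrableOn hp).mono_set Set.Ioc_subset_Ioi_self)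
  · filter_upwards [self_mem_ae_restrict (measurableSet_Ioc :
      MeasurableSet (Set.Ioc (0:ℝ) t₂))] with u hu
    have h1 : (0:ℝ) ≤ u ^ (p - 1) := Real.rpow_nonneg (le_of_lt hu.1) _
    positivity
  · exact (Set.Ioc_subset_Ioc_right h).eventuallyLE

lemma lowerGamma_measurable {p : ℝ} (hp : 0 < p) : Measurable (lowerGamma p) :=
  (lowerGamma_mono hp).measurable

lemma measurable_rpow_const (y : ℝ) : Measurable fun x : ℝ => x ^ y := by
  apply measurable_of_continuousOn_compl_singleton (0:ℝ)
  intro x hx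
  exact (Real.continuousAt_rpow_const x y (Or.inl hx)).continuousWithinAt

set_option maxHeartbeats 1000000 in
/-- exact integral content of Theorem 4 ((D.2)–(D.3)): the ergodic rate
of the weak user `U_t` equals
`(1/ln 2)∫_0^{a_t/a_r} (1/(1+x))[1 − ∫_0^D (2z/D²)γ(p_t,√T_x(z)/q_t)/Γ(p_t) dz] dx`. -/
theorem stmt_15 (a_r a_t lam βt P σ0sq σssq η0 ζ ds α D p_t q_t : ℝ)
    (har : 0 < a_r) (hat : 0 < a_t) (hlam : 0 < lam) (hβt : 0 < βt)
    (hP : 0 < P) (hσ0 : 0 < σ0sq) (hσs : 0 < σssq) (hη0 : 0 < η0) (hζ : 0 < ζ)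
    (hds : 0 < ds) (hα : 0 < α) (hD : 0 < D) (hp : 0 < p_t) (hq : 0 < q_t)
    (T : ℝ → ℝ → ℝ)
    (hT : ∀ x : ℝ, 0 < x → x < a_t / a_r → ∀ z : ℝ,
      T x z = x * ds ^ α / (P * (a_t - x * a_r)) *
        (ζ * σssq / η0 + z ^ α * σ0sq / (η0 ^ 2 * βt * lam)))
    (Ω : Type) [MeasureSpace Ω] (hprob : IsProbabilityMeasure (ℙ : Measure Ω))
    (X d : Ω → ℝ) (hXm : Measurable X) (hdm : Measurable d)
    (hindep : IndepFun X d (ℙ : Measure Ω))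
    (hX0 : ∀ᵐ ω ∂(ℙ : Measure Ω), 0 ≤ X ω)
    (hXcdf : ∀ x : ℝ, 0 ≤ x → (ℙ : Measure Ω) {ω | X ω ≤ x}
      = ENNReal.ofReal (lowerGamma p_t (Real.sqrt x / q_t) / Real.Gamma p_t))
    (hd : Measure.map d (ℙ : Measure Ω) = (volume.restrict (Set.Icc 0 D)).withDensity
      (fun z => ENNReal.ofReal (2 * z / D ^ 2)))
    (Gc W : Ω → ℝ)
    (hGc : ∀ ω, Gc ω = η0 ^ 2 * (ds * d ω) ^ (-α) * X ω)
    (hW : ∀ ω, W ω = η0 * d ω ^ (-α) * σssq * ζ) :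
    ∫ ω, Real.logb 2 (1 +
        a_t * lam * βt * P * Gc ω /
          (a_r * lam * βt * P * Gc ω + lam * βt * W ω + σ0sq)) ∂(ℙ : Measure Ω)
      = (1 / Real.log 2) * ∫ x in Set.Ioo (0 : ℝ) (a_t / a_r),
          1 / (1 + x) * (1 - ∫ z in Set.Icc (0 : ℝ) D,
            2 * z / D ^ 2 *
              (lowerGamma p_t (Real.sqrt (T x z) / q_t) / Real.Gamma p_t)) := by
  classical
  have hb : 0 < a_t / a_r := div_pos hat har
  set b : ℝ := a_t / a_r with hbdef
  set F : ℝ → ℝ := fun s => lowerGamma p_t (Real.sqrt s / q_t) / Real.Gamma p_t with hFdef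
  set Y : Ω → ℝ := fun ω => a_t * lam * βt * P * Gc ω /
      (a_r * lam * βt * P * Gc ω + lam * βt * W ω + σ0sq) with hYdef
  -- basic facts about F
  have hΓpos : 0 < Real.Gamma p_t := Real.Gamma_pos_of_pos hp
  have hF0 : ∀ s, 0 ≤ F s := fun s => div_nonneg (lowerGamma_nonneg _ _) hΓpos.le
  have hF1 : ∀ s : ℝ, 0 ≤ s → F s ≤ 1 := by
    intro s hs
    have h1 := hXcdf s hs
    have hle : (ℙ : Measure Ω) {ω | X ω ≤ s} ≤ 1 := prob_le_one
    rw [h1] at hle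
    exact ENNReal.ofReal_le_one.mp hle
  have hFmeas : Measurable F := by
    apply Measurable.div_const
    exact (lowerGamma_measurable hp).comp (Real.continuous_sqrt.measurable.div_const q_t)
  -- measurability of Gc, W, Y
  have hGcm : Measurable Gc := by
    have : Gc = fun ω => η0 ^ 2 * (ds * d ω) ^ (-α) * X ω := funext hGc
    rw [this]
    exact (((measurable_rpow_const (-α)).comp (hdm.const_mul ds)).const_mul _).mul hXm
  have hWm : Measurable W := by
    have : W = fun ω => η0 * d ω ^ (-α) * σssq * ζ := funext hW
    rw [this]
    exact ((((measurable_rpow_const (-α)).comp hdm).const_mul _).mul_const _).mul_const _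
  have hYm : Measurable Y := by
    apply Measurable.div
    · exact hGcm.const_mul _
    · exact ((hGcm.const_mul _).add (hWm.const_mul _)).add_const _
  -- a.e. properties of d and X
  have hdIcc : ∀ᵐ ω ∂(ℙ : Measure Ω), d ω ∈ Set.Icc 0 D := by
    have h1 : (ℙ : Measure Ω) (d ⁻¹' (Set.Icc 0 D)ᶜ) = 0 := by
      rw [← Measure.map_apply hdm measurableSet_Icc.compl, hd,
        withDensity_apply _ measurableSet_Icc.compl,
        Measure.restrict_restrict measurableSet_Icc.compl]
      simp
    rw [ae_iff]
    exact h1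
  have hdne : ∀ᵐ ω ∂(ℙ : Measure Ω), d ω ≠ 0 := by
    have h1 : (ℙ : Measure Ω) (d ⁻¹' {0}) = 0 := by
      rw [← Measure.map_apply hdm (measurableSet_singleton 0), hd,
        withDensity_apply _ (measurableSet_singleton 0)]
      apply setLIntegral_measure_zero
      rw [Measure.restrict_apply (measurableSet_singleton 0)]
      exact measure_mono_null Set.inter_subset_left (measure_singleton 0)
    rw [ae_iff]
    convert h1 using 2
    ext ω
    simp
  have hae : ∀ᵐ ω ∂(ℙ : Measure Ω), 0 ≤ X ω ∧ d ω ∈ Set.Ioc 0 D := by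
    filter_upwards [hX0, hdIcc, hdne] with ω h1 h2 h3
    exact ⟨h1, lt_of_le_of_ne h2.1 (Ne.symm h3), h2.2⟩
  -- pointwise properties of Y
  have hYprop : ∀ ω, 0 ≤ X ω → d ω ∈ Set.Ioc 0 D → 0 ≤ Y ω ∧ Y ω < b := by
    intro ω hX hdω
    have hk : 0 < (ds * d ω) ^ (-α) := Real.rpow_pos_of_pos (mul_pos hds hdω.1) _
    have hk2 : 0 < d ω ^ (-α) := Real.rpow_pos_of_pos hdω.1 _
    have hG : 0 ≤ Gc ω := by rw [hGc]; positivity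
    have hWp : 0 < W ω := by rw [hW]; positivity
    have hden : 0 < a_r * lam * βt * P * Gc ω + lam * βt * W ω + σ0sq := by positivity
    constructor
    · exact div_nonneg (by positivity) hden.le
    · rw [hYdef, hbdef]
      rw [div_lt_div_iff₀ hden har]
      nlinarith [mul_pos (mul_pos hlam hβt) hWp, mul_pos hat (mul_pos (mul_pos hlam hβt) hWp),
        mul_pos hat hσ0]
  have hYnn : ∀ᵐ ω ∂(ℙ : Measure Ω), 0 ≤ Y ω := by
    filter_upwards [hae] with ω h; exact (hYprop ω h.1 h.2).1
  have hYlt : ∀ᵐ ω ∂(ℙ : Measure Ω), Y ω < b := by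
    filter_upwards [hae] with ω h; exact (hYprop ω h.1 h.2).2
  -- layer cake
  have hg_int : ∀ t : ℝ, t > 0 → IntervalIntegrable (fun s : ℝ => 1/(1+s)) volume 0 t := by
    intro t ht
    apply ContinuousOn.intervalIntegrable
    apply ContinuousOn.div continuousOn_const (continuousOn_const.add continuousOn_id)
    intro s hs
    rw [Set.uIcc_of_le ht.le] at hs
    have h1 := hs.1
    intro hcon
    simp only [Pi.add_apply, id_eq] at hcon
    linarith
  have hg_nn : ∀ᵐ t ∂(volume.restrict (Set.Ioi (0:ℝ))), 0 ≤ (fun s : ℝ => 1/(1+s)) t := by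
    filter_upwards [self_mem_ae_restrict measurableSet_Ioi] with t ht
    have h1 : (0:ℝ) < t := ht
    positivity
  have hlogint : ∀ y : ℝ, 0 ≤ y → (∫ t in (0:ℝ)..y, 1/(1+t)) = Real.log (1+y) := by
    intro y hy
    have h1 : (∫ t in (0:ℝ)..y, 1/(1+t)) = ∫ u in (1:ℝ)..(1+y), 1/u := by
      simpa using intervalIntegral.integral_comp_add_left (a := (0:ℝ)) (b := y)
        (fun u : ℝ => 1/u) 1
    have h0 : (0:ℝ) ∉ Set.uIcc (1:ℝ) (1+y) := by
      rw [Set.uIcc_of_le (by linarith)]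
      intro hcon
      have := hcon.1
      linarith
    rw [h1, integral_one_div h0, div_one]
  have hlayer : ∫⁻ ω, ENNReal.ofReal (Real.log (1 + Y ω)) ∂(ℙ : Measure Ω)
      = ∫⁻ t in Set.Ioi (0:ℝ),
          (ℙ : Measure Ω) {a | t < Y a} * ENNReal.ofReal (1/(1+t)) := by
    rw [← lintegral_comp_eq_lintegral_meas_lt_mul (ℙ : Measure Ω) hYnn hYm.aemeasurable
      hg_int hg_nn]
    apply lintegral_congr_ae
    filter_upwards [hYnn] with ω h
    rw [hlogint _ h]
  have hnull : ∀ t : ℝ, b ≤ t → (ℙ : Measure Ω) {a | t < Y a} = 0 := by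
    intro t ht
    apply measure_mono_null (fun ω hω => ?_) (ae_iff.mp hYlt)
    simp only [Set.mem_setOf_eq, not_lt]
    exact ht.trans (le_of_lt hω)
  have hIoo : (∫⁻ t in Set.Ioi (0:ℝ),
        (ℙ : Measure Ω) {a | t < Y a} * ENNReal.ofReal (1/(1+t)))
      = ∫⁻ t in Set.Ioo (0:ℝ) b,
        (ℙ : Measure Ω) {a | t < Y a} * ENNReal.ofReal (1/(1+t)) := by
    have hdisj : Disjoint (Set.Ioo (0:ℝ) b) (Set.Ici b) := by
      rw [Set.disjoint_left]
      intro a ha hb'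
      exact absurd hb' (not_le.mpr ha.2)
    rw [← Set.Ioo_union_Ici_eq_Ioi hb, lintegral_union measurableSet_Ici hdisj]
    have h0 : (∫⁻ t in Set.Ici b,
        (ℙ : Measure Ω) {a | t < Y a} * ENNReal.ofReal (1/(1+t))) = 0 := by
      rw [setLIntegral_congr_fun measurableSet_Ici
        (fun t ht => by rw [hnull t ht, zero_mul])]
      simp
    rw [h0, add_zero]
  -- properties of T and the inner integral
  have hA : 0 < ds ^ α := Real.rpow_pos_of_pos hds α
  have hTnn : ∀ x : ℝ, 0 < x → x < b → ∀ z ∈ Set.Icc (0:ℝ) D, 0 ≤ T x z := by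
    intro x hx1 hx2 z hz
    have hax : 0 < a_t - x * a_r := by
      have := (lt_div_iff₀ har).mp (hbdef ▸ hx2)
      linarith
    rw [hT x hx1 hx2 z]
    have h1 : 0 ≤ z ^ α := Real.rpow_nonneg hz.1 _
    positivity
  have hTmeas : ∀ x : ℝ, 0 < x → x < b → Measurable (T x) := by
    intro x hx1 hx2
    have h1 : T x = fun z : ℝ => x * ds ^ α / (P * (a_t - x * a_r)) *
        (ζ * σssq / η0 + z ^ α * σ0sq / (η0 ^ 2 * βt * lam)) := funext (hT x hx1 hx2)
    rw [h1]
    exact ((((measurable_rpow_const α).mul_const _).div_const _).const_add _).const_mul _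
  have hintc : IntegrableOn (fun z : ℝ => 2 * z / D ^ 2) (Set.Icc 0 D) :=
    (((continuous_const.mul continuous_id).div_const _)).integrableOn_Icc
  have hconst : ∫ z in Set.Icc (0:ℝ) D, 2 * z / D ^ 2 = 1 := by
    rw [integral_Icc_eq_integral_Ioc, ← intervalIntegral.integral_of_le hD.le]
    have h1 : (fun z : ℝ => 2 * z / D ^ 2) = fun z : ℝ => z * (2 / D ^ 2) := by
      funext z; ring
    rw [h1, intervalIntegral.integral_mul_const, integral_id]
    field_simp
    ring
  have hint2 : ∀ x : ℝ, 0 < x → x < b →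
      IntegrableOn (fun z : ℝ => 2 * z / D ^ 2 * F (T x z)) (Set.Icc 0 D) := by
    intro x hx1 hx2
    have hmeas2 : Measurable fun z : ℝ => 2 * z / D ^ 2 * F (T x z) :=
      ((measurable_id.const_mul 2).div_const _).mul (hFmeas.comp (hTmeas x hx1 hx2))
    apply Integrable.mono' (integrable_const (2 * D / D ^ 2)) hmeas2.aestronglyMeasurable
    filter_upwards [self_mem_ae_restrict measurableSet_Icc] with z hz
    rw [Real.norm_eq_abs, abs_mul,
      abs_of_nonneg (div_nonneg (by linarith [hz.1] : (0:ℝ) ≤ 2 * z) (by positivity)),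
      abs_of_nonneg (hF0 _)]
    calc 2 * z / D ^ 2 * F (T x z) ≤ 2 * D / D ^ 2 * 1 := by
          apply mul_le_mul _ (hF1 _ (hTnn x hx1 hx2 z hz)) (hF0 _) (by positivity)
          gcongr
          exact hz.2
      _ = 2 * D / D ^ 2 := mul_one _
  have hint1 : ∀ x : ℝ, 0 < x → x < b →
      IntegrableOn (fun z : ℝ => 2 * z / D ^ 2 * (1 - F (T x z))) (Set.Icc 0 D) := by
    intro x hx1 hx2
    have h1 : (fun z : ℝ => 2 * z / D ^ 2 * (1 - F (T x z)))
        = fun z : ℝ => 2 * z / D ^ 2 - 2 * z / D ^ 2 * F (T x z) := by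
      funext z; ring
    rw [h1]
    exact hintc.sub (hint2 x hx1 hx2)
  have hinner01 : ∀ x : ℝ, 0 < x → x < b →
      (∫ z in Set.Icc (0:ℝ) D, 2 * z / D ^ 2 * F (T x z)) ≤ 1 := by
    intro x hx1 hx2
    rw [← hconst]
    apply setIntegral_mono_on (hint2 x hx1 hx2) hintc measurableSet_Icc
    intro z hz
    calc 2 * z / D ^ 2 * F (T x z) ≤ 2 * z / D ^ 2 * 1 := by
          apply mul_le_mul_of_nonneg_left (hF1 _ (hTnn x hx1 hx2 z hz))
          exact div_nonneg (by linarith [hz.1]) (by positivity)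
      _ = 2 * z / D ^ 2 := mul_one _
  -- the survival function of Y
  haveI hPX : IsProbabilityMeasure ((ℙ : Measure Ω).map X) :=
    Measure.isProbabilityMeasure_map hXm.aemeasurable
  have hXtail : ∀ s : ℝ, 0 ≤ s →
      (ℙ : Measure Ω).map X {a : ℝ | s < a} = ENNReal.ofReal (1 - F s) := by
    intro s hs
    have hIic : (ℙ : Measure Ω).map X (Set.Iic s) = ENNReal.ofReal (F s) := by
      rw [Measure.map_apply hXm measurableSet_Iic]
      exact hXcdf s hs
    have hset : {a : ℝ | s < a} = (Set.Iic s)ᶜ := by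
      ext a; simp [not_le]
    rw [hset, measure_compl measurableSet_Iic (measure_ne_top _ _), measure_univ, hIic,
      ENNReal.ofReal_sub _ (hF0 s), ENNReal.ofReal_one]
  have hsurv : ∀ x : ℝ, x ∈ Set.Ioo (0:ℝ) b →
      (ℙ : Measure Ω) {ω | x < Y ω}
        = ENNReal.ofReal (1 - ∫ z in Set.Icc (0:ℝ) D, 2 * z / D ^ 2 * F (T x z)) := by
    intro x hx
    obtain ⟨hx1, hx2⟩ := hx
    have hax : 0 < a_t - x * a_r := by
      have := (lt_div_iff₀ har).mp (hbdef ▸ hx2)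
      linarith
    -- a.e. set identity
    have hseteq : {ω | x < Y ω} =ᵐ[(ℙ : Measure Ω)] {ω | T x (d ω) < X ω} := by
      apply Filter.eventuallyEq_set.mpr
      filter_upwards [hae] with ω hω
      obtain ⟨hXω, hdω⟩ := hω
      have hu : 0 < d ω := hdω.1
      have hB : 0 < d ω ^ α := Real.rpow_pos_of_pos hu α
      have hmul : (ds * d ω) ^ (-α) = (ds ^ α)⁻¹ * (d ω ^ α)⁻¹ := by
        rw [Real.mul_rpow hds.le hu.le, Real.rpow_neg hds.le, Real.rpow_neg hu.le]
      have hneg : d ω ^ (-α) = (d ω ^ α)⁻¹ := Real.rpow_neg hu.le α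
      simp only [Set.mem_setOf_eq, hYdef]
      rw [hGc, hW, hT x hx1 hx2, hmul, hneg]
      have hden : 0 < a_r * lam * βt * P * (η0 ^ 2 * ((ds ^ α)⁻¹ * (d ω ^ α)⁻¹) * X ω)
          + lam * βt * (η0 * (d ω ^ α)⁻¹ * σssq * ζ) + σ0sq := by positivity
      rw [lt_div_iff₀ hden]
      have hK : 0 < (a_t - x * a_r) * (lam * βt * P * η0 ^ 2 * (ds ^ α)⁻¹ * (d ω ^ α)⁻¹) := by
        positivity
      have e1 : x * (a_r * lam * βt * P * (η0 ^ 2 * ((ds ^ α)⁻¹ * (d ω ^ α)⁻¹) * X ω)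
          + lam * βt * (η0 * (d ω ^ α)⁻¹ * σssq * ζ) + σ0sq)
          = x * (lam * βt * (η0 * (d ω ^ α)⁻¹ * σssq * ζ) + σ0sq)
            + x * a_r * lam * βt * P * (η0 ^ 2 * ((ds ^ α)⁻¹ * (d ω ^ α)⁻¹) * X ω) := by ring
      have e2 : a_t * lam * βt * P * (η0 ^ 2 * ((ds ^ α)⁻¹ * (d ω ^ α)⁻¹) * X ω)
          = (a_t - x * a_r) * (lam * βt * P * η0 ^ 2 * (ds ^ α)⁻¹ * (d ω ^ α)⁻¹) * X ω
            + x * a_r * lam * βt * P * (η0 ^ 2 * ((ds ^ α)⁻¹ * (d ω ^ α)⁻¹) * X ω) := by ring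
      rw [e1, e2, add_lt_add_iff_right]
      have heq : x * ds ^ α / (P * (a_t - x * a_r))
            * (ζ * σssq / η0 + d ω ^ α * σ0sq / (η0 ^ 2 * βt * lam))
          = x * (lam * βt * (η0 * (d ω ^ α)⁻¹ * σssq * ζ) + σ0sq)
            / ((a_t - x * a_r) * (lam * βt * P * η0 ^ 2 * (ds ^ α)⁻¹ * (d ω ^ α)⁻¹)) := by
        field_simp
      rw [heq, div_lt_iff₀ hK, mul_comm (X ω)]
    -- independence
    have hmap : (ℙ : Measure Ω).map (fun ω => (d ω, X ω))
        = ((ℙ : Measure Ω).map d).prod ((ℙ : Measure Ω).map X) :=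
      (indepFun_iff_map_prod_eq_prod_map_map hdm.aemeasurable hXm.aemeasurable).mp hindep.symm
    have hS : MeasurableSet {p : ℝ × ℝ | T x p.1 < p.2} :=
      measurableSet_lt ((hTmeas x hx1 hx2).comp measurable_fst) measurable_snd
    have h1 : (((ℙ : Measure Ω).map d).prod ((ℙ : Measure Ω).map X)) {p : ℝ × ℝ | T x p.1 < p.2}
        = (ℙ : Measure Ω) {ω | T x (d ω) < X ω} := by
      rw [← hmap, Measure.map_apply (hdm.prodMk hXm) hS]
      rfl
    rw [measure_congr hseteq, ← h1, Measure.prod_apply hS]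
    -- integrate over the law of d
    have hdens : Measurable fun z : ℝ => ENNReal.ofReal (2 * z / D ^ 2) :=
      ((measurable_id.const_mul (2:ℝ)).div_const _).ennreal_ofReal
    rw [hd, lintegral_withDensity_eq_lintegral_mul_non_measurable _
      hdens (Filter.Eventually.of_forall fun z => ENNReal.ofReal_lt_top)]
    have hptwise : ∀ z ∈ Set.Icc (0:ℝ) D,
        ((fun z : ℝ => ENNReal.ofReal (2 * z / D ^ 2)) *
          (fun z : ℝ => ((ℙ : Measure Ω).map X) (Prod.mk z ⁻¹' {p : ℝ × ℝ | T x p.1 < p.2}))) z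
        = ENNReal.ofReal (2 * z / D ^ 2 * (1 - F (T x z))) := by
      intro z hz
      have hpre : Prod.mk z ⁻¹' {p : ℝ × ℝ | T x p.1 < p.2} = {a : ℝ | T x z < a} := rfl
      simp only [Pi.mul_apply]
      rw [hpre, hXtail _ (hTnn x hx1 hx2 z hz),
        ← ENNReal.ofReal_mul (div_nonneg (by linarith [hz.1] : (0:ℝ) ≤ 2 * z) (by positivity))]
    rw [setLIntegral_congr_fun measurableSet_Icc hptwise]
    have hnn1 : 0 ≤ᵐ[volume.restrict (Set.Icc (0:ℝ) D)]
        fun z : ℝ => 2 * z / D ^ 2 * (1 - F (T x z)) := by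
      filter_upwards [self_mem_ae_restrict measurableSet_Icc] with z hz
      apply mul_nonneg (div_nonneg (by linarith [hz.1]) (by positivity))
      linarith [hF1 _ (hTnn x hx1 hx2 z hz)]
    rw [← ofReal_integral_eq_lintegral_ofReal (hint1 x hx1 hx2) hnn1]
    congr 1
    have h2 : (fun z : ℝ => 2 * z / D ^ 2 * (1 - F (T x z)))
        = fun z : ℝ => 2 * z / D ^ 2 - 2 * z / D ^ 2 * F (T x z) := by
      funext z; ring
    rw [h2, integral_sub hintc (hint2 x hx1 hx2), hconst]
  -- convert everything to Bochner integrals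
  have hlognn : 0 ≤ᵐ[(ℙ : Measure Ω)] fun ω => Real.log (1 + Y ω) := by
    filter_upwards [hYnn] with ω h
    exact Real.log_nonneg (by linarith)
  have hlogaes : AEStronglyMeasurable (fun ω => Real.log (1 + Y ω)) (ℙ : Measure Ω) :=
    (Real.measurable_log.comp (measurable_const.add hYm)).aestronglyMeasurable
  have hmg : Measurable fun t : ℝ => ((ℙ : Measure Ω) {a | t < Y a}).toReal * (1/(1+t)) := by
    have h1 : Antitone fun t : ℝ => (ℙ : Measure Ω) {a | t < Y a} :=
      fun s t hst => measure_mono fun ω hω => lt_of_le_of_lt hst hω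
    exact (ENNReal.measurable_toReal.comp h1.measurable).mul
      (measurable_const.div (measurable_const.add measurable_id))
  have haes : AEStronglyMeasurable
      (fun x : ℝ => 1/(1+x) * (1 - ∫ z in Set.Icc (0:ℝ) D, 2 * z / D ^ 2 * F (T x z)))
      (volume.restrict (Set.Ioo (0:ℝ) b)) := by
    apply hmg.aestronglyMeasurable.congr
    filter_upwards [self_mem_ae_restrict measurableSet_Ioo] with x hx
    rw [hsurv x hx, ENNReal.toReal_ofReal (by linarith [hinner01 x hx.1 hx.2])]
    ring
  have hfnn : 0 ≤ᵐ[volume.restrict (Set.Ioo (0:ℝ) b)]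
      fun x : ℝ => 1/(1+x) * (1 - ∫ z in Set.Icc (0:ℝ) D, 2 * z / D ^ 2 * F (T x z)) := by
    filter_upwards [self_mem_ae_restrict measurableSet_Ioo] with x hx
    have h2 := hinner01 x hx.1 hx.2
    have h3 : (0:ℝ) < 1 + x := by linarith [hx.1]
    have h4 : (0:ℝ) ≤ 1/(1+x) := by positivity
    exact mul_nonneg h4 (by linarith)
  have hfin : ∫ ω, Real.log (1 + Y ω) ∂(ℙ : Measure Ω)
      = ∫ x in Set.Ioo (0:ℝ) b,
          1/(1+x) * (1 - ∫ z in Set.Icc (0:ℝ) D, 2 * z / D ^ 2 * F (T x z)) := by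
    rw [integral_eq_lintegral_of_nonneg_ae hlognn hlogaes, hlayer, hIoo,
      integral_eq_lintegral_of_nonneg_ae hfnn haes]
    congr 1
    apply lintegral_congr_ae
    filter_upwards [self_mem_ae_restrict measurableSet_Ioo] with x hx
    have h2 := hinner01 x hx.1 hx.2
    rw [hsurv x hx, ← ENNReal.ofReal_mul (by linarith : (0:ℝ) ≤ 1 -
      ∫ z in Set.Icc (0:ℝ) D, 2 * z / D ^ 2 * F (T x z))]
    congr 1
    ring
  -- conclude
  calc ∫ ω, Real.logb 2 (1 + a_t * lam * βt * P * Gc ω /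
          (a_r * lam * βt * P * Gc ω + lam * βt * W ω + σ0sq)) ∂(ℙ : Measure Ω)
      = ∫ ω, Real.log (1 + Y ω) * (1 / Real.log 2) ∂(ℙ : Measure Ω) := by
        apply integral_congr_ae (Filter.Eventually.of_forall fun ω => ?_)
        simp only [hYdef, Real.logb]
        ring
    _ = (∫ ω, Real.log (1 + Y ω) ∂(ℙ : Measure Ω)) * (1 / Real.log 2) :=
        integral_mul_const _ _
    _ = (1 / Real.log 2) * ∫ x in Set.Ioo (0:ℝ) b,
          1 / (1 + x) * (1 - ∫ z in Set.Icc (0:ℝ) D,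
            2 * z / D ^ 2 * (lowerGamma p_t (Real.sqrt (T x z) / q_t) / Real.Gamma p_t)) := by
        rw [hfin]
        simp only [hFdef]
        ring
end
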